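/- arXiv:hep-th/0601232 — 3 statements merged into one kernel-verified Lean document; each statement's English description precedes it below -/
import Mathlib

section
/- Let N_1, N_2, N_3 be integers ≥ 2, let σ be the permutation (1 3) of {1,2,3}, let (B_{i_1})_{1 ≤ i_1 ≤ N_3 N_1} be a basis of the space of N_3×N_1 complex matrices and (B_{i_3})_{1 ≤ i_3 ≤ N_1 N_3} a basis of the space of N_1×N_3 complex matrices. If the tensor commutation matrix satisfies U_{N_1⊗N_3} = Σ_{i_1=1}^{N_1 N_3} Σ_{i_3=1}^{N_1 N_3} α^{i_1 i_3} B_{i_1} ⊗ B_{i_3} for complex scalars α^{i_1 i_3}, then the σ-tensor permutation matrix satisfies U_{N_1⊗N_2⊗N_3}(σ) = Σ_{i_1=1}^{N_1 N_3} Σ_{i_3=1}^{N_1 N_3} α^{i_1 i_3} B_{i_1} ⊗ I_{N_2} ⊗ B_{i_3}, where I_{N_2} is the N_2×N_2 identity matrix. -/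
open Matrix Kronecker

/-- Let `σ = (1 3)` on `{1,2,3}`, let `(B₁ᵢ)` be a basis of the `N₃ × N₁`
complex matrices and `(B₃ⱼ)` a basis of the `N₁ × N₃` complex matrices.  If the tensor
commutation matrix `U_{N₁⊗N₃}` (the matrix `UC` with `UC · (a ⊗ b) = b ⊗ a` for all
`a ∈ ℂ^{N₁}`, `b ∈ ℂ^{N₃}`) satisfies `UC = Σᵢⱼ α i j • (B₁ᵢ ⊗ B₃ⱼ)`, then the
`σ`-tensor permutation matrix `U_{N₁⊗N₂⊗N₃}(σ)` (the matrix `UP` with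
`UP · (a₁ ⊗ a₂ ⊗ a₃) = a₃ ⊗ a₂ ⊗ a₁`) satisfies
`UP = Σᵢⱼ α i j • (B₁ᵢ ⊗ I_{N₂} ⊗ B₃ⱼ)`. -/
theorem tensor_transposition_insert_identity (N₁ N₂ N₃ : ℕ)
    (h₁ : 2 ≤ N₁) (h₂ : 2 ≤ N₂) (h₃ : 2 ≤ N₃)
    (B₁ : Module.Basis (Fin (N₃ * N₁)) ℂ (Matrix (Fin N₃) (Fin N₁) ℂ))
    (B₃ : Module.Basis (Fin (N₁ * N₃)) ℂ (Matrix (Fin N₁) (Fin N₃) ℂ))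
    (α : Fin (N₃ * N₁) → Fin (N₁ * N₃) → ℂ)
    (UC : Matrix (Fin N₃ × Fin N₁) (Fin N₁ × Fin N₃) ℂ)
    (hUC : ∀ (a : Fin N₁ → ℂ) (b : Fin N₃ → ℂ),
      UC.mulVec (fun x => a x.1 * b x.2) = fun x => b x.1 * a x.2)
    (hsum : UC = ∑ i, ∑ j, α i j • (B₁ i ⊗ₖ B₃ j))
    (UP : Matrix (Fin N₃ × Fin N₂ × Fin N₁) (Fin N₁ × Fin N₂ × Fin N₃) ℂ)
    (hUP : ∀ (a₁ : Fin N₁ → ℂ) (a₂ : Fin N₂ → ℂ) (a₃ : Fin N₃ → ℂ),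
      UP.mulVec (fun x => a₁ x.1 * (a₂ x.2.1 * a₃ x.2.2)) =
        fun x => a₃ x.1 * (a₂ x.2.1 * a₁ x.2.2)) :
    UP = ∑ i, ∑ j, α i j • (B₁ i ⊗ₖ ((1 : Matrix (Fin N₂) (Fin N₂) ℂ) ⊗ₖ B₃ j)) := by
  have key : ∀ (c1 : Fin N₁) (c2 : Fin N₃) (r1 : Fin N₃) (r2 : Fin N₁),
      UC (r1, r2) (c1, c2) =
        (if r1 = c2 then (1:ℂ) else 0) * (if r2 = c1 then 1 else 0) := by
    intro c1 c2 r1 r2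
    have h := congrFun (hUC (Pi.single c1 1) (Pi.single c2 1)) (r1, r2)
    simpa [mulVec, dotProduct, Fintype.sum_prod_type, Pi.single_apply, mul_ite, ite_mul,
      Finset.sum_ite_eq, Finset.sum_ite_eq', eq_comm] using h
  ext ⟨r1, r2, r3⟩ ⟨c1, c2, c3⟩
  have hU := congrFun (hUP (Pi.single c1 1) (Pi.single c2 1) (Pi.single c3 1)) (r1, r2, r3)
  have hL : UP (r1, r2, r3) (c1, c2, c3) =
      (if r1 = c3 then (1:ℂ) else 0) * ((if r2 = c2 then (1:ℂ) else 0) * (if r3 = c1 then 1 else 0)) := by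
    simpa [mulVec, dotProduct, Fintype.sum_prod_type, Pi.single_apply, mul_ite, ite_mul,
      Finset.sum_ite_eq, Finset.sum_ite_eq', eq_comm, mul_comm, mul_left_comm, mul_assoc] using hU
  have hR := congrFun (congrFun hsum (r1, r3)) (c1, c3)
  rw [key] at hR
  simp only [Matrix.sum_apply, Matrix.smul_apply, kroneckerMap_apply, smul_eq_mul] at hR ⊢
  simp only [Matrix.one_apply]
  rw [hL]
  by_cases h : r2 = c2
  · simpa [h] using hR
  · simp [h]
end

section
/- Let n ≥ 2 and let Λ_1, …, Λ_{n²−1} be n×n complex matrices that are Hermitian, traceless, and satisfy Tr(Λ_a Λ_b) = 2δ_{ab} for all a, b. Then the tensor commutation matrix n ⊗ n satisfies U_{n⊗n} = (1/n) I_n ⊗ I_n + (1/2) Σ_{a=1}^{n²−1} Λ_a ⊗ Λ_a, where I_n is the n×n identity matrix and ⊗ is the Kronecker product. -/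
open Matrix Kronecker

/-- Completeness relation for an orthogonal traceless family together with the identity. -/
lemma gellMann_completeness (n : ℕ) (hn : 2 ≤ n)
    (Λ : Fin (n ^ 2 - 1) → Matrix (Fin n) (Fin n) ℂ)
    (htrace : ∀ a, (Λ a).trace = 0)
    (horth : ∀ a b, (Λ a * Λ b).trace = if a = b then 2 else 0)
    (X : Matrix (Fin n) (Fin n) ℂ) :
    ((n : ℂ)⁻¹ * X.trace) • (1 : Matrix (Fin n) (Fin n) ℂ)
      + (2 : ℂ)⁻¹ • ∑ a, (Λ a * X).trace • Λ a = X := by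
  have hn0 : (n : ℂ) ≠ 0 := by
    exact_mod_cast Nat.cast_ne_zero.mpr (by omega)
  -- the family {Λ_a} ∪ {1}
  set f : Fin (n ^ 2 - 1) ⊕ Unit → Matrix (Fin n) (Fin n) ℂ :=
    Sum.elim Λ (fun _ => 1) with hf
  -- trace pairing of members of the family with Λ a
  have hpair : ∀ a i, (Λ a * f i).trace = if i = Sum.inl a then 2 else 0 := by
    rintro a (b | u)
    · have hfb : f (Sum.inl b) = Λ b := rfl
      rw [hfb, horth a b]
      by_cases h : a = b <;> simp [h, eq_comm]
    · have hfu : f (Sum.inr u) = 1 := rfl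
      rw [hfu, mul_one, htrace a]
      simp
  have htr1 : (1 : Matrix (Fin n) (Fin n) ℂ).trace = (n : ℂ) := by
    simp [Matrix.trace_one]
  have htrf : ∀ i, (f i).trace = if i = Sum.inr () then (n : ℂ) else 0 := by
    rintro (b | u)
    · simp [hf, htrace b]
    · simp [hf, htr1]
  -- linear independence
  have hli : LinearIndependent ℂ f := by
    rw [linearIndependent_iff']
    intro s g hsum i hi
    rcases i with b | u
    · have h1 : (Λ b * ∑ i ∈ s, g i • f i).trace = 0 := by rw [hsum]; simp
      rw [Finset.mul_sum, trace_sum] at h1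
      have h2 : ∀ i ∈ s, (Λ b * (g i • f i)).trace
          = if i = Sum.inl b then 2 * g i else 0 := by
        intro i _
        rw [mul_smul_comm, trace_smul, hpair b i]
        by_cases h : i = Sum.inl b <;> simp [h, mul_comm]
      rw [Finset.sum_congr rfl h2, Finset.sum_ite_eq' s (Sum.inl b)
        (fun i => 2 * g i), if_pos hi] at h1
      have := mul_eq_zero.mp h1
      simpa using this
    · have h1 : (∑ i ∈ s, g i • f i).trace = 0 := by rw [hsum]; simp
      rw [trace_sum] at h1
      have h2 : ∀ i ∈ s, (g i • f i).trace
          = if i = Sum.inr () then (n : ℂ) * g i else 0 := by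
        intro i _
        rw [trace_smul, htrf i]
        by_cases h : i = Sum.inr () <;> simp [h, mul_comm]
      rw [Finset.sum_congr rfl h2, Finset.sum_ite_eq' s (Sum.inr ())
        (fun i => (n : ℂ) * g i), if_pos hi] at h1
      have := mul_eq_zero.mp h1
      rcases this with h | h
      · exact absurd h hn0
      · exact h
  have hcard : Fintype.card (Fin (n ^ 2 - 1) ⊕ Unit)
      = Module.finrank ℂ (Matrix (Fin n) (Fin n) ℂ) := by
    rw [Module.finrank_matrix]
    simp only [Fintype.card_sum, Fintype.card_fin, Fintype.card_unit, Fintype.card_fin]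
    have : 1 ≤ n ^ 2 := by nlinarith
    have : n ^ 2 - 1 + 1 = n ^ 2 := by omega
    rw [this, sq]
    simp
  let b : Module.Basis (Fin (n ^ 2 - 1) ⊕ Unit) ℂ (Matrix (Fin n) (Fin n) ℂ) :=
    basisOfLinearIndependentOfCardEqFinrank hli hcard
  have hb : ⇑b = f := coe_basisOfLinearIndependentOfCardEqFinrank hli hcard
  -- the linear map T
  let T : Matrix (Fin n) (Fin n) ℂ →ₗ[ℂ] Matrix (Fin n) (Fin n) ℂ :=
    { toFun := fun X => ((n : ℂ)⁻¹ * X.trace) • (1 : Matrix (Fin n) (Fin n) ℂ)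
        + (2 : ℂ)⁻¹ • ∑ a, (Λ a * X).trace • Λ a
      map_add' := by
        intro X Y
        have h1 : ∀ a : Fin (n ^ 2 - 1), Λ a * (X + Y) = Λ a * X + Λ a * Y :=
          fun a => mul_add _ _ _
        simp only [h1, trace_add, mul_add, add_smul, Finset.sum_add_distrib, smul_add]
        abel
      map_smul' := by
        intro c X
        have h1 : ∀ a : Fin (n ^ 2 - 1), Λ a * (c • X) = c • (Λ a * X) :=
          fun a => mul_smul_comm c _ _
        simp only [h1, trace_smul, smul_eq_mul, RingHom.id_apply, smul_add,
          Finset.smul_sum, smul_smul]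
        congr 1
        · congr 1
          ring
        · exact Finset.sum_congr rfl fun a _ => by congr 1; ring }
  have hTapp : ∀ Y, T Y = ((n : ℂ)⁻¹ * Y.trace) • (1 : Matrix (Fin n) (Fin n) ℂ)
      + (2 : ℂ)⁻¹ • ∑ a, (Λ a * Y).trace • Λ a := fun _ => rfl
  have hT : T = LinearMap.id := by
    refine Module.Basis.ext b fun i => ?_
    rw [hb, LinearMap.id_apply]
    rcases i with a | u
    · have hfa : f (Sum.inl a) = Λ a := rfl
      rw [hfa, hTapp, htrace a]
      have : ∀ c, (Λ c * Λ a).trace • Λ c = if c = a then (2 : ℂ) • Λ a else 0 := by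
        intro c
        rw [horth c a]
        by_cases h : c = a <;> simp [h]
      rw [Finset.sum_congr rfl (fun c _ => this c), Finset.sum_ite_eq' Finset.univ a
        (fun _ => (2 : ℂ) • Λ a), if_pos (Finset.mem_univ a)]
      simp [smul_smul]
    · have hfu : f (Sum.inr u) = 1 := rfl
      rw [hfu, hTapp, htr1, inv_mul_cancel₀ hn0]
      simp [htrace]
  have := congrArg (fun (g : Matrix (Fin n) (Fin n) ℂ →ₗ[ℂ] _) => g X) hT
  simpa [hTapp] using this

/-- Let `n ≥ 2` and let `Λ_1, …, Λ_{n²-1}` be `n × n` complex matrices that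
are Hermitian, traceless and satisfy `Tr(Λ_a Λ_b) = 2 δ_{ab}` (generalized Gell-Mann matrices).
Then the tensor commutation matrix `U_{n⊗n}` (the unique matrix `U` with `U · (a ⊗ b) = b ⊗ a`
for all `a, b ∈ ℂ^n`) satisfies `U = (1/n) Iₙ ⊗ Iₙ + (1/2) Σ_a Λ_a ⊗ Λ_a`. -/
theorem tensor_commutation_eq_gellMann_sum (n : ℕ) (hn : 2 ≤ n)
    (Λ : Fin (n ^ 2 - 1) → Matrix (Fin n) (Fin n) ℂ)
    (hherm : ∀ a, (Λ a).IsHermitian)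
    (htrace : ∀ a, (Λ a).trace = 0)
    (horth : ∀ a b, (Λ a * Λ b).trace = if a = b then 2 else 0)
    (U : Matrix (Fin n × Fin n) (Fin n × Fin n) ℂ)
    (hU : ∀ a b : Fin n → ℂ,
      U.mulVec (fun x => a x.1 * b x.2) = fun x => b x.1 * a x.2) :
    U = ((1 : ℂ) / (n : ℂ)) • ((1 : Matrix (Fin n) (Fin n) ℂ) ⊗ₖ (1 : Matrix (Fin n) (Fin n) ℂ))
        + ((1 : ℂ) / 2) • ∑ a, Λ a ⊗ₖ Λ a := by
  ext ⟨i, j⟩ ⟨k, l⟩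
  have hUe : U (i, j) (k, l) = if j = k then (if i = l then (1 : ℂ) else 0) else 0 := by
    have h := congrFun (hU (fun x => if x = k then 1 else 0)
      (fun x => if x = l then 1 else 0)) (i, j)
    simp only [Matrix.mulVec, dotProduct] at h
    rw [Fintype.sum_prod_type] at h
    simp only [mul_ite, mul_one, mul_zero, ite_mul, zero_mul, one_mul,
      Finset.sum_ite_eq', Finset.mem_univ, if_true] at h
    exact h
  have hc := gellMann_completeness n hn Λ htrace horth (Matrix.single k i 1)
  have htrE : ∀ a : Fin (n ^ 2 - 1),
      (Λ a * Matrix.single k i 1).trace = (Λ a) i k := by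
    intro a
    simp [Matrix.trace, Matrix.diag, Matrix.mul_apply, Matrix.single, ite_and,
      Finset.sum_ite_eq]
  have htrEE : (Matrix.single k i (1 : ℂ)).trace = if k = i then 1 else 0 := by
    simp [Matrix.trace, Matrix.diag, Matrix.single, ite_and, Finset.sum_ite_eq, eq_comm]
  rw [htrEE] at hc
  simp only [htrE] at hc
  have hce := congrFun (congrFun hc j) l
  simp only [Matrix.add_apply, Matrix.smul_apply, Matrix.sum_apply, Matrix.one_apply,
    smul_eq_mul, Matrix.single, Matrix.of_apply] at hce
  simp only [Matrix.add_apply, Matrix.smul_apply, Matrix.sum_apply, kroneckerMap_apply,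
    Matrix.one_apply, smul_eq_mul]
  rw [hUe]
  have e1 : (if j = k then (if i = l then (1 : ℂ) else 0) else 0)
      = if k = j ∧ i = l then 1 else 0 := by
    by_cases h1 : j = k <;> by_cases h2 : i = l <;> simp [h1, h2, eq_comm]
  have e2 : (if i = k then (1 : ℂ) else 0) = if k = i then 1 else 0 := by
    by_cases h : i = k <;> simp [h, eq_comm]
  rw [e1, e2, ← hce, one_div, one_div]
  ring
end

section
/- Let n ≥ 2, let N ≥ 2, let 1 ≤ i < j ≤ N, let σ be the transposition (i j) of {1,…,N}, and let Λ_1, …, Λ_{n²−1} be n×n complex matrices that are Hermitian, traceless, and satisfy Tr(Λ_a Λ_b) = 2δ_{ab} for all a, b. Then the tensor transposition matrix satisfies U_{n^{⊗N}}(σ) = (1/n) I_n^{⊗N} + (1/2) Σ_{a=1}^{n²−1} M_a, where M_a is the Kronecker product of N factors each equal to I_n except that the i-th and the j-th factors are both equal to Λ_a, and I_n^{⊗N} denotes the Kronecker product of N copies of the n×n identity matrix. -/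
open Matrix

/-- `U` is the tensor permutation matrix `U_{n^{⊗N}}(σ)`: the unique `n^N × n^N` complex matrix
with `U · (a_1 ⊗ ⋯ ⊗ a_N) = a_{σ(1)} ⊗ ⋯ ⊗ a_{σ(N)}` for all column vectors `a_t ∈ ℂ^n`.
A vector of `(ℂ^n)^{⊗N}` is encoded as a function on `Fin N → Fin n`, the Kronecker product
`a_1 ⊗ ⋯ ⊗ a_N` being `fun x => ∏ t, a t (x t)`. -/
def IsTensorPermMatrix (n N : ℕ) (σ : Equiv.Perm (Fin N))
    (U : Matrix (Fin N → Fin n) (Fin N → Fin n) ℂ) : Prop :=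
  ∀ a : Fin N → (Fin n → ℂ),
    U.mulVec (fun x => ∏ t, a t (x t)) = fun x => ∏ t, a (σ t) (x t)

private theorem gellMann_complete (n : ℕ) (hn : 2 ≤ n) (Λ : Fin (n ^ 2 - 1) → Matrix (Fin n) (Fin n) ℂ)
    (htrace : ∀ a, (Λ a).trace = 0)
    (horth : ∀ a b, (Λ a * Λ b).trace = if a = b then 2 else 0)
    (p q r s : Fin n) :
    (if p = s then (1:ℂ) else 0) * (if q = r then 1 else 0)
      = (1 / n) * ((if p = q then (1:ℂ) else 0) * (if r = s then 1 else 0))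
        + (1 / 2) * ∑ a, Λ a p q * Λ a r s := by
  classical
  have hn0 : (n : ℂ) ≠ 0 := by exact_mod_cast (by omega : n ≠ 0)
  set F : Option (Fin (n ^ 2 - 1)) → Matrix (Fin n) (Fin n) ℂ :=
    fun k => k.elim (1 : Matrix (Fin n) (Fin n) ℂ) Λ with hF
  have htr : ∀ k l, (F k * F l).trace =
      Option.elim k ((Option.elim l (n : ℂ) (fun _ => 0)))
        (fun a => Option.elim l 0 (fun b => if a = b then 2 else 0)) := by
    rintro (⟨⟩|a) (⟨⟩|b) <;>
      simp [hF, htrace, horth, Matrix.trace_one]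
  have hindep : LinearIndependent ℂ F := by
    rw [Fintype.linearIndependent_iff]
    intro g hg l
    have h0 : ((∑ k, g k • F k) * F l).trace = 0 := by rw [hg]; simp
    rw [Finset.sum_mul] at h0
    simp only [smul_mul_assoc, Matrix.trace_sum, Matrix.trace_smul, smul_eq_mul] at h0
    rw [Finset.sum_congr rfl (fun k _ => by rw [htr k l])] at h0
    cases l with
    | none =>
      simp only [Option.elim] at h0
      rw [Fintype.sum_option] at h0
      simp only [mul_zero, Finset.sum_const_zero, add_zero, mul_eq_zero] at h0
      tauto
    | some b =>
      simp only [Option.elim] at h0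
      rw [Fintype.sum_option] at h0
      simp only [mul_zero, zero_add, mul_ite, mul_comm, Finset.sum_ite_eq',
        Finset.mem_univ, if_true] at h0
      have : g (some b) * 2 = 0 := by simpa [mul_comm] using h0
      simpa using this
  have hcard : Fintype.card (Option (Fin (n ^ 2 - 1)))
      = Module.finrank ℂ (Matrix (Fin n) (Fin n) ℂ) := by
    rw [Module.finrank_matrix]
    simp only [Fintype.card_option, Fintype.card_fin, Module.finrank_self, mul_one]
    have : 1 ≤ n ^ 2 := by nlinarith
    have := sq n
    omega
  have hspan : Submodule.span ℂ (Set.range F) = ⊤ :=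
    hindep.span_eq_top_of_card_eq_finrank hcard
  -- reconstruction identity, via span induction with a plain function
  have hTid : ∀ X : Matrix (Fin n) (Fin n) ℂ,
      (X.trace / n) • (1 : Matrix (Fin n) (Fin n) ℂ)
        + ((1 : ℂ) / 2) • ∑ a, (Λ a * X).trace • Λ a = X := by
    intro X
    have hX : X ∈ Submodule.span ℂ (Set.range F) := by rw [hspan]; exact Submodule.mem_top
    induction hX using Submodule.span_induction with
    | mem x h =>
      obtain ⟨k, rfl⟩ := h
      cases k with
      | none =>
        have h1 : F none = (1 : Matrix (Fin n) (Fin n) ℂ) := rfl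
        rw [h1]
        simp [Matrix.trace_one, htrace, div_self hn0]
      | some a =>
        have h1 : F (some a) = Λ a := rfl
        rw [h1, htrace a]
        simp only [zero_div, zero_smul, zero_add]
        rw [Finset.sum_congr rfl (fun b _ => by rw [horth b a])]
        simp only [ite_smul, zero_smul, Finset.sum_ite_eq', Finset.mem_univ, if_true]
        rw [smul_smul]
        norm_num
    | zero => simp
    | add x y hx hy ihx ihy =>
      have hsum : (∑ a, (Λ a * (x + y)).trace • Λ a)
          = ∑ a, ((Λ a * x).trace • Λ a + (Λ a * y).trace • Λ a) :=
        Finset.sum_congr rfl fun a _ => by rw [mul_add, Matrix.trace_add, add_smul]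
      rw [Matrix.trace_add, add_div, add_smul, hsum, Finset.sum_add_distrib, smul_add]
      conv_rhs => rw [← ihx, ← ihy]
      abel
    | smul c x hx ihx =>
      have hsum : (∑ a, (Λ a * (c • x)).trace • Λ a)
          = ∑ a, c • ((Λ a * x).trace • Λ a) :=
        Finset.sum_congr rfl fun a _ => by
          rw [Matrix.mul_smul, Matrix.trace_smul, smul_eq_mul, mul_smul]
      rw [hsum, ← Finset.smul_sum, Matrix.trace_smul, smul_eq_mul, mul_div_assoc,
        mul_smul, smul_comm ((1 : ℂ) / 2) c, ← smul_add]
      conv_rhs => rw [← ihx]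
  -- trace of A * stdBasisMatrix
  have htrE : ∀ (A : Matrix (Fin n) (Fin n) ℂ),
      (A * Matrix.single q p (1 : ℂ)).trace = A p q := by
    intro A
    rw [Matrix.trace]
    rw [Finset.sum_eq_single p]
    · simp [Matrix.diag]
    · intro k _ hk
      simpa [Matrix.diag] using Matrix.mul_single_apply_of_ne (c := (1:ℂ)) q p k k hk A
    · simp
  have key := hTid (Matrix.single q p (1:ℂ))
  rw [Finset.sum_congr rfl (fun a _ => by rw [htrE (Λ a)])] at key
  have htrE2 : (Matrix.single q p (1:ℂ)).trace = if q = p then 1 else 0 := by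
    rw [Matrix.trace]
    by_cases h : q = p
    · subst h
      rw [Finset.sum_eq_single q]
      · simp [Matrix.diag]
      · intro k _ hk
        simpa [Matrix.diag] using
          Matrix.single_apply_of_row_ne (Ne.symm hk) q k (1 : ℂ)
      · simp
    · rw [if_neg h]
      apply Finset.sum_eq_zero
      intro k _
      simp only [Matrix.diag_apply]
      exact Matrix.single_apply_of_ne (i := q) (j := p) (c := (1:ℂ)) (i' := k) (j' := k)
        (by rintro ⟨rfl, rfl⟩; exact h rfl)
  rw [htrE2] at key
  have key2 := congrArg (fun X : Matrix (Fin n) (Fin n) ℂ => X r s) key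
  simp only [Matrix.add_apply, Matrix.smul_apply, Matrix.one_apply, Finset.sum_apply,
    smul_eq_mul, Matrix.sum_apply] at key2
  have e1 : (if q = p then (1:ℂ) else 0) = (if p = q then 1 else 0) := by
    by_cases h : p = q <;> simp [h, eq_comm]
  have e2 : Matrix.single q p (1:ℂ) r s
      = (if p = s then (1:ℂ) else 0) * (if q = r then 1 else 0) := by
    by_cases h1 : q = r <;> by_cases h2 : p = s <;>
      simp [h1, h2, Matrix.single]
  rw [e1, e2] at key2
  ring_nf at key2 ⊢
  exact key2.symm

/-- Let `n, N ≥ 2`, let `i < j` in `{1, …, N}`, let `σ` be the transposition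
`(i j)`, and let `Λ_1, …, Λ_{n²-1}` be `n × n` complex matrices that are Hermitian, traceless
and satisfy `Tr(Λ_a Λ_b) = 2 δ_{ab}` (generalized Gell-Mann matrices).  Then the tensor
transposition matrix satisfies `U_{n^{⊗N}}(σ) = (1/n) Iₙ^{⊗N} + (1/2) Σ_a M_a`, where `M_a`
is the Kronecker product of `N` factors all equal to `Iₙ` except that the `i`-th and `j`-th
factors are both `Λ_a`. -/
theorem tensor_transposition_eq_gellMann_sum (n N : ℕ) (hn : 2 ≤ n) (hN : 2 ≤ N)
    (i j : Fin N) (hij : i < j)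
    (Λ : Fin (n ^ 2 - 1) → Matrix (Fin n) (Fin n) ℂ)
    (hherm : ∀ a, (Λ a).IsHermitian)
    (htrace : ∀ a, (Λ a).trace = 0)
    (horth : ∀ a b, (Λ a * Λ b).trace = if a = b then 2 else 0)
    (U : Matrix (Fin N → Fin n) (Fin N → Fin n) ℂ)
    (hU : IsTensorPermMatrix n N (Equiv.swap i j) U) :
    U = ((1 : ℂ) / (n : ℂ)) •
          Matrix.of (fun x y : Fin N → Fin n =>
            ∏ t, (1 : Matrix (Fin n) (Fin n) ℂ) (x t) (y t))
        + ((1 : ℂ) / 2) • ∑ a,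
            Matrix.of (fun x y : Fin N → Fin n =>
              ∏ t, (if t = i ∨ t = j then Λ a else (1 : Matrix (Fin n) (Fin n) ℂ))
                (x t) (y t)) := by
  classical
  have hji : j ≠ i := hij.ne'
  have hijne : i ≠ j := hij.ne
  -- entries of U
  have hUentry : ∀ x y : Fin N → Fin n,
      U x y = ∏ t, (if x t = y (Equiv.swap i j t) then (1:ℂ) else 0) := by
    intro x y
    have hprod : ∀ z : Fin N → Fin n,
        (∏ t, if z t = y t then (1:ℂ) else 0) = if z = y then 1 else 0 := by
      intro z
      rw [Finset.prod_boole]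
      congr 1
      simp [funext_iff]
    have h := congrFun (hU (fun t k => if k = y t then 1 else 0)) x
    simp only [Matrix.mulVec, dotProduct] at h
    rw [Finset.sum_congr rfl (fun z _ => by rw [hprod z])] at h
    simpa [mul_ite, Finset.sum_ite_eq'] using h
  ext x y
  rw [hUentry x y]
  -- split products at i and j
  have hsplit : ∀ f : Fin N → ℂ,
      ∏ t, f t = f i * (f j * ∏ t ∈ (Finset.univ.erase i).erase j, f t) := by
    intro f
    rw [← Finset.mul_prod_erase Finset.univ f (Finset.mem_univ i),
        ← Finset.mul_prod_erase (Finset.univ.erase i) f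
          (Finset.mem_erase.2 ⟨hji, Finset.mem_univ j⟩)]
  have hmem : ∀ t ∈ (Finset.univ.erase i).erase j, t ≠ i ∧ t ≠ j := by
    intro t ht
    rw [Finset.mem_erase, Finset.mem_erase] at ht
    exact ⟨ht.2.1, ht.1⟩
  set P : ℂ := ∏ t ∈ (Finset.univ.erase i).erase j, (if x t = y t then (1:ℂ) else 0) with hP
  -- LHS
  have hL : (∏ t, (if x t = y (Equiv.swap i j t) then (1:ℂ) else 0))
      = (if x i = y j then (1:ℂ) else 0) * ((if x j = y i then (1:ℂ) else 0) * P) := by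
    rw [hsplit, Equiv.swap_apply_left, Equiv.swap_apply_right]
    congr 1
    congr 1
    apply Finset.prod_congr rfl
    intro t ht
    rw [Equiv.swap_apply_of_ne_of_ne (hmem t ht).1 (hmem t ht).2]
  -- identity product
  have hId : (∏ t, (1 : Matrix (Fin n) (Fin n) ℂ) (x t) (y t))
      = (if x i = y i then (1:ℂ) else 0) * ((if x j = y j then (1:ℂ) else 0) * P) := by
    rw [hsplit, hP]
    simp only [Matrix.one_apply]
  -- the Λ products
  have hM : ∀ a, (∏ t, (if t = i ∨ t = j then Λ a else (1 : Matrix (Fin n) (Fin n) ℂ))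
        (x t) (y t))
      = Λ a (x i) (y i) * Λ a (x j) (y j) * P := by
    intro a
    rw [hsplit, if_pos (Or.inl rfl), if_pos (Or.inr rfl)]
    rw [Finset.prod_congr rfl (fun t ht => by
      rw [if_neg (by
        rintro (rfl | rfl)
        · exact (hmem t ht).1 rfl
        · exact (hmem t ht).2 rfl), Matrix.one_apply])]
    ring
  -- assemble
  simp only [Matrix.add_apply, Matrix.smul_apply, Matrix.of_apply, Matrix.sum_apply,
    smul_eq_mul]
  rw [hL, hId]
  rw [Finset.sum_congr rfl (fun a _ => hM a), ← Finset.sum_mul]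
  have hcomp := gellMann_complete n hn Λ htrace horth (x i) (y i) (x j) (y j)
  have e : (if x j = y i then (1:ℂ) else 0) = (if y i = x j then 1 else 0) := by
    by_cases h : x j = y i <;> simp [h, eq_comm]
  rw [e]
  linear_combination P * hcomp
end
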